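/- Let E ⊆ ℝ, Y a Banach space, φ : E → ℝ a function, and f : ℝ → Y a Lipschitz function. Suppose E is not porous at t₀ ∈ E, both φ and f∘φ are differentiable at t₀ (as functions on E), and φ'(t₀) ≠ 0. Then f is differentiable at φ(t₀). -/

import Mathlib

open Filter Set
open scoped Topology NNReal

/-- `E ⊆ ℝ` is porous at `t`: there are `ε > 0` and `x i → t` with
`E ∩ B(x i, ε · |t − x i|) = ∅` for all `i`. -/
def PorousAt (E : Set ℝ) (t : ℝ) : Prop :=
  ∃ ε : ℝ, 0 < ε ∧ ∃ x : ℕ → ℝ, Tendsto x atTop (𝓝 t) ∧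
    ∀ i, E ∩ Metric.closedBall (x i) (ε * |t - x i|) = ∅

set_option maxHeartbeats 1000000 in
/-- Let `E ⊆ ℝ`, `Y` a Banach space, `f : ℝ → Y` Lipschitz. If `E` is not
porous at `t₀ ∈ E`, both `φ` and `f ∘ φ` are differentiable at `t₀` within `E`, and
`φ'(t₀) ≠ 0`, then `f` is differentiable at `φ t₀`. -/
theorem stmt9 {Y : Type*} [NormedAddCommGroup Y] [NormedSpace ℝ Y] [CompleteSpace Y]
    (E : Set ℝ) (t₀ : ℝ) (ht₀ : t₀ ∈ E) (hnp : ¬ PorousAt E t₀)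
    (φ : ℝ → ℝ) (f : ℝ → Y) (K : ℝ≥0) (hf : LipschitzWith K f)
    (L : ℝ) (hφ : HasDerivWithinAt φ L E t₀) (hL : L ≠ 0)
    (D : Y) (hfφ : HasDerivWithinAt (f ∘ φ) D E t₀) :
    DifferentiableAt ℝ f (φ t₀) := by
  -- Step 0: ε-δ form of non-porosity
  have key : ∀ ε : ℝ, 0 < ε → ∃ δ > (0:ℝ), ∀ x : ℝ, |x - t₀| < δ →
      (E ∩ Metric.closedBall x (ε * |t₀ - x|)).Nonempty := by
    intro ε hε
    by_contra h
    push_neg at h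
    apply hnp
    refine ⟨ε, hε, ?_⟩
    have h' : ∀ n : ℕ, ∃ x : ℝ, |x - t₀| < 1/(n+1) ∧
        E ∩ Metric.closedBall x (ε * |t₀ - x|) = ∅ := by
      intro n
      obtain ⟨x, hx1, hx2⟩ := h (1/(n+1)) (by positivity)
      exact ⟨x, hx1, hx2⟩
    choose x hx1 hx2 using h'
    refine ⟨x, ?_, hx2⟩
    rw [tendsto_iff_dist_tendsto_zero]
    refine squeeze_zero (fun n => dist_nonneg) (fun n => ?_)
      tendsto_one_div_add_atTop_nhds_zero_nat
    rw [Real.dist_eq]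
    exact (hx1 n).le
  -- Step 1: ε-δ forms of the two derivatives
  have hφ' : ∀ ε : ℝ, 0 < ε → ∃ δ > (0:ℝ), ∀ t ∈ E, |t - t₀| < δ →
      ‖φ t - φ t₀ - (t - t₀) • L‖ ≤ ε * |t - t₀| := by
    intro ε hε
    have h1 := (hasDerivWithinAt_iff_isLittleO.mp hφ).def hε
    rw [Filter.eventually_iff, Metric.mem_nhdsWithin_iff] at h1
    obtain ⟨δ, hδ, hsub⟩ := h1
    refine ⟨δ, hδ, fun t htE ht => ?_⟩
    have : t ∈ Metric.ball t₀ δ ∩ E := ⟨by rwa [Metric.mem_ball, Real.dist_eq], htE⟩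
    have := hsub this
    simpa [Real.norm_eq_abs] using this
  have hfφ' : ∀ ε : ℝ, 0 < ε → ∃ δ > (0:ℝ), ∀ t ∈ E, |t - t₀| < δ →
      ‖f (φ t) - f (φ t₀) - (t - t₀) • D‖ ≤ ε * |t - t₀| := by
    intro ε hε
    have h1 := (hasDerivWithinAt_iff_isLittleO.mp hfφ).def hε
    rw [Filter.eventually_iff, Metric.mem_nhdsWithin_iff] at h1
    obtain ⟨δ, hδ, hsub⟩ := h1
    refine ⟨δ, hδ, fun t htE ht => ?_⟩
    have : t ∈ Metric.ball t₀ δ ∩ E := ⟨by rwa [Metric.mem_ball, Real.dist_eq], htE⟩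
    have := hsub this
    simpa [Real.norm_eq_abs, Function.comp] using this
  -- Main argument
  have main : HasDerivAt f (L⁻¹ • D) (φ t₀) := by
    rw [hasDerivAt_iff_isLittleO, Asymptotics.isLittleO_iff]
    intro c hc
    set M : ℝ := |L| with hMdef
    have hM0 : 0 < M := abs_pos.mpr hL
    set C : ℝ := (K : ℝ) * (2 / M + 1) + 2 / M + ‖D‖ / M + 1 with hCdef
    have hC : 0 < C := by positivity
    set ε' : ℝ := min 1 (c / C) with hε'def
    have hε'0 : 0 < ε' := lt_min one_pos (div_pos hc hC)
    have hε'1 : ε' ≤ 1 := min_le_left _ _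
    have hε'c : ε' * C ≤ c := by
      have h1 : ε' ≤ c / C := min_le_right _ _
      have := mul_le_mul_of_nonneg_right h1 hC.le
      calc ε' * C ≤ (c / C) * C := this
        _ = c := by field_simp
    obtain ⟨δ1, hδ1, H1⟩ := hφ' ε' hε'0
    obtain ⟨δ2, hδ2, H2⟩ := hfφ' ε' hε'0
    obtain ⟨δ3, hδ3, H3⟩ := key ε' hε'0
    set r : ℝ := M * min δ3 (min δ1 δ2 / 2) with hrdef
    have hmin0 : 0 < min δ3 (min δ1 δ2 / 2) := lt_min hδ3 (by positivity)
    have hr : 0 < r := by positivity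
    rw [Metric.eventually_nhds_iff]
    refine ⟨r, hr, fun z hz => ?_⟩
    rw [Real.dist_eq] at hz
    set h : ℝ := z - φ t₀ with hhdef
    have hhr : |h| < r := hz
    set x : ℝ := t₀ + h / L with hxdef
    have hxt : |x - t₀| = |h| / M := by
      rw [hxdef, show t₀ + h / L - t₀ = h / L by ring, abs_div]
    have hrM : r / M = min δ3 (min δ1 δ2 / 2) := by
      rw [hrdef]; field_simp
    have hhM : |h| / M < min δ3 (min δ1 δ2 / 2) := by
      rw [← hrM]; exact (div_lt_div_iff_of_pos_right hM0).mpr hhr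
    have hx3 : |x - t₀| < δ3 := hxt ▸ hhM.trans_le (min_le_left _ _)
    obtain ⟨t, htE, htb⟩ := H3 x hx3
    rw [Metric.mem_closedBall, Real.dist_eq] at htb
    have htx0 : |t₀ - x| = |h| / M := by rw [abs_sub_comm]; exact hxt
    have htx : |t - x| ≤ ε' * (|h| / M) := by rw [htx0] at htb; exact htb
    have htt0 : |t - t₀| ≤ 2 * (|h| / M) := by
      have h1 : |t - t₀| ≤ |t - x| + |x - t₀| := abs_sub_le t x t₀
      have h2 : ε' * (|h| / M) ≤ 1 * (|h| / M) :=
        mul_le_mul_of_nonneg_right hε'1 (by positivity)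
      rw [hxt] at h1
      nlinarith [abs_nonneg h]
    have httδ : |t - t₀| < min δ1 δ2 := by
      have h1 : |h| / M < min δ1 δ2 / 2 := hhM.trans_le (min_le_right _ _)
      calc |t - t₀| ≤ 2 * (|h| / M) := htt0
        _ < 2 * (min δ1 δ2 / 2) := by nlinarith
        _ = min δ1 δ2 := by ring
    have hE1 := H1 t htE (httδ.trans_le (min_le_left _ _))
    have hE2 := H2 t htE (httδ.trans_le (min_le_right _ _))
    -- key algebraic identities
    have hxtid : t - t₀ - h / L = t - x := by rw [hxdef]; ring
    -- estimate e1 : ‖φ t - z‖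
    have e1 : ‖φ t - z‖ ≤ ε' * (2 / M + 1) * |h| := by
      have hdec : φ t - z = (φ t - φ t₀ - (t - t₀) • L) + (t - x) * L := by
        rw [smul_eq_mul, ← hxtid, hhdef]
        field_simp
        ring
      calc ‖φ t - z‖ ≤ ‖φ t - φ t₀ - (t - t₀) • L‖ + ‖(t - x) * L‖ := by
            rw [hdec]; exact norm_add_le _ _
        _ ≤ ε' * |t - t₀| + |t - x| * M := by
            have hnm : ‖(t - x) * L‖ = |t - x| * M := by
              rw [Real.norm_eq_abs, abs_mul]
            rw [hnm]; exact add_le_add hE1 le_rfl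
        _ ≤ ε' * (2 * (|h| / M)) + ε' * (|h| / M) * M := by
            refine add_le_add (mul_le_mul_of_nonneg_left htt0 hε'0.le) ?_
            exact mul_le_mul_of_nonneg_right htx hM0.le
        _ = ε' * (2 / M + 1) * |h| := by field_simp
    -- estimate e2
    have e2 : ‖f (φ t) - f (φ t₀) - (t - t₀) • D‖ ≤ ε' * (2 / M) * |h| := by
      calc ‖f (φ t) - f (φ t₀) - (t - t₀) • D‖ ≤ ε' * |t - t₀| := hE2
        _ ≤ ε' * (2 * (|h| / M)) := mul_le_mul_of_nonneg_left htt0 hε'0.le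
        _ = ε' * (2 / M) * |h| := by field_simp
    -- estimate e3
    have e3 : ‖(t - x) • D‖ ≤ ε' * (‖D‖ / M) * |h| := by
      rw [norm_smul, Real.norm_eq_abs]
      calc |t - x| * ‖D‖ ≤ (ε' * (|h| / M)) * ‖D‖ :=
            mul_le_mul_of_nonneg_right htx (norm_nonneg D)
        _ = ε' * (‖D‖ / M) * |h| := by field_simp
    -- Lipschitz estimate
    have eLip : ‖f z - f (φ t)‖ ≤ (K : ℝ) * (ε' * (2 / M + 1) * |h|) := by
      have := hf.dist_le_mul z (φ t)
      rw [dist_eq_norm, dist_eq_norm] at this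
      calc ‖f z - f (φ t)‖ ≤ (K : ℝ) * ‖z - φ t‖ := this
        _ ≤ (K : ℝ) * (ε' * (2 / M + 1) * |h|) := by
            refine mul_le_mul_of_nonneg_left ?_ (K.coe_nonneg)
            rw [← norm_neg, neg_sub]; exact e1
    -- decomposition
    have hdecomp : f z - f (φ t₀) - (z - φ t₀) • (L⁻¹ • D)
        = (f z - f (φ t)) + (f (φ t) - f (φ t₀) - (t - t₀) • D) + (t - x) • D := by
      have hs : (z - φ t₀) • (L⁻¹ • D) = (h / L) • D := by
        rw [← hhdef, smul_smul, div_eq_mul_inv]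
      rw [hs]
      have h2 : (t - t₀) • D - (t - x) • D = (h / L) • D := by
        rw [← sub_smul]
        congr 1
        have : t - t₀ - (t - x) = h / L := by rw [hxdef]; ring
        exact this
      rw [← h2]; abel
    calc ‖f z - f (φ t₀) - (z - φ t₀) • (L⁻¹ • D)‖
        ≤ ‖f z - f (φ t)‖ + ‖f (φ t) - f (φ t₀) - (t - t₀) • D‖ + ‖(t - x) • D‖ := by
          rw [hdecomp]; exact norm_add₃_le
      _ ≤ (K : ℝ) * (ε' * (2 / M + 1) * |h|) + ε' * (2 / M) * |h|
            + ε' * (‖D‖ / M) * |h| := add_le_add (add_le_add eLip e2) e3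
      _ = ε' * ((K : ℝ) * (2 / M + 1) + 2 / M + ‖D‖ / M) * |h| := by ring
      _ ≤ ε' * C * |h| := by
          refine mul_le_mul_of_nonneg_right ?_ (abs_nonneg h)
          rw [hCdef]
          nlinarith [hε'0.le]
      _ ≤ c * |h| := mul_le_mul_of_nonneg_right hε'c (abs_nonneg h)
      _ = c * ‖z - φ t₀‖ := by rw [Real.norm_eq_abs, hhdef]
  exact main.differentiableAt
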